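/- Every closed (2m−1)-bounce billiard path q₀, q₁, …, q_{2m−1}, q_{2m} = q₀ in the wedge W_γ retraces itself: q_{m+j} = q_{m−j} for every integer j with 0 ≤ j ≤ m. -/

import Mathlib

open Real

noncomputable section

/-- The Euclidean plane. -/
abbrev E2 := EuclideanSpace ℝ (Fin 2)

/-- Construct a point of the plane from its coordinates. -/
def pt (x y : ℝ) : E2 := WithLp.toLp 2 ![x, y]

/-- The open wedge of opening angle `γ`, bounded by the horizontal line `{y = 0}`
and the line `{y = x·tan γ}`. -/
def wedge (γ : ℝ) : Set E2 := {p | 0 < p 0 ∧ 0 < p 1 ∧ p 1 < p 0 * Real.tan γ}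

/-- A direction vector of the boundary line: the horizontal line if `horiz`, the
line `{y = x·tan γ}` otherwise. -/
def lineDir (γ : ℝ) (horiz : Bool) : E2 :=
  if horiz then pt 1 0 else pt (Real.cos γ) (Real.sin γ)

/-- Membership of the corresponding boundary line. -/
def onBoundary (γ : ℝ) (horiz : Bool) (p : E2) : Prop :=
  if horiz then p 1 = 0 else p 1 = p 0 * Real.tan γ

/-- The linear Submodule.reflection of `ℝ²` across the `1`-dimensional subspace spanned by `d`,
applied to `v` (for `d ≠ 0`). -/
def reflDir (d v : E2) : E2 :=
  (2 * (inner ℝ v d : ℝ) / (inner ℝ d d : ℝ)) • d - v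

/-- A closed `n`-bounce billiard path based at the point `p` of the wedge `W_γ`:
a sequence `q 0 = p, q 1, …, q n, q (n+1) = p` with consecutive points distinct,
whose intermediate points lie alternately on the two boundary lines (minus the
vertex), whose open segments lie in the open wedge, and which satisfies the law
of Submodule.reflection at each bounce. -/
structure ClosedBounce (γ : ℝ) (p : E2) (n : ℕ) where
  q : ℕ → E2
  /-- `horiz k` records whether the `k`-th bounce is on the horizontal line `ℓ₀`. -/
  horiz : ℕ → Bool
  alt : ∀ k, 1 ≤ k → k < n → horiz (k + 1) = !horiz k
  start : q 0 = p
  closes : q (n + 1) = p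
  distinct : ∀ k ≤ n, q k ≠ q (k + 1)
  bounce_ne_vertex : ∀ k, 1 ≤ k → k ≤ n → q k ≠ 0
  onLine : ∀ k, 1 ≤ k → k ≤ n → onBoundary γ (horiz k) (q k)
  segs_in_wedge : ∀ k ≤ n, ∀ t : ℝ, 0 < t → t < 1 →
    (1 - t) • q k + t • q (k + 1) ∈ wedge γ
  reflects : ∀ k, 1 ≤ k → k ≤ n →
    (‖q (k + 1) - q k‖)⁻¹ • (q (k + 1) - q k) =
      reflDir (lineDir γ (horiz k)) ((‖q k - q (k - 1)‖)⁻¹ • (q k - q (k - 1)))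

/-- The total length of a closed `n`-bounce billiard path. -/
def totalLength {γ : ℝ} {p : E2} {n : ℕ} (P : ClosedBounce γ p n) : ℝ :=
  ∑ k ∈ Finset.range (n + 1), ‖P.q (k + 1) - P.q k‖

/-! ### Auxiliary lemmas -/

lemma inner_E2 (x y : E2) : (inner ℝ x y : ℝ) = x 0 * y 0 + x 1 * y 1 := by
  simp [PiLp.inner_apply, Fin.sum_univ_two, RCLike.inner_apply, conj_trivial]
  ring

lemma inner_lineDir (γ : ℝ) (b : Bool) : (inner ℝ (lineDir γ b) (lineDir γ b) : ℝ) = 1 := by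
  cases b <;> rw [inner_E2] <;> simp [lineDir, inner_E2, pt] <;> nlinarith [Real.sin_sq_add_cos_sq γ]

lemma reflDir_eq {d : E2} (hd : (inner ℝ d d : ℝ) = 1) (v : E2) :
    reflDir d v = Submodule.reflection (ℝ ∙ d) v := by
  have hn : (‖d‖:ℝ)^2 = 1 := by rw [← real_inner_self_eq_norm_sq, hd]
  rw [reflDir, Submodule.reflection_apply, Submodule.starProjection_singleton, hn, hd, real_inner_comm]
  norm_num
  module

lemma reflDir_lineDir_eq (γ : ℝ) (b : Bool) (v : E2) :
    reflDir (lineDir γ b) v = Submodule.reflection (ℝ ∙ lineDir γ b) v :=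
  reflDir_eq (inner_lineDir γ b) v

lemma reflDir_neg (d v : E2) : reflDir d (-v) = - reflDir d v := by
  simp only [reflDir, inner_neg_left, neg_sub_neg]
  module

/-- A point of a boundary line lies in the span of the corresponding direction. -/
lemma onBoundary_mem_span {γ : ℝ} (hc : Real.cos γ ≠ 0) {b : Bool} {v : E2}
    (h : onBoundary γ b v) : v ∈ ℝ ∙ lineDir γ b := by
  refine Submodule.mem_span_singleton.2 ?_
  cases b with
  | false =>
    have h' : v 1 = v 0 * Real.tan γ := h
    refine ⟨v 0 / Real.cos γ, ?_⟩
    ext i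
    fin_cases i
    · simp only [lineDir, Bool.false_eq_true, if_false, PiLp.smul_apply, smul_eq_mul, pt,
        Fin.zero_eta, Matrix.cons_val_zero]
      field_simp
    · simp only [lineDir, Bool.false_eq_true, if_false, PiLp.smul_apply, smul_eq_mul, pt,
        Fin.mk_one, Matrix.cons_val_one, Matrix.head_cons, Matrix.cons_val_zero]
      rw [h', Real.tan_eq_sin_div_cos]
      field_simp
  | true =>
    have h' : v 1 = 0 := h
    refine ⟨v 0, ?_⟩
    ext i
    fin_cases i <;>
      simp only [lineDir, if_true, PiLp.smul_apply, smul_eq_mul, pt,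
        Fin.zero_eta, Fin.mk_one, Matrix.cons_val_zero, Matrix.cons_val_one, Matrix.head_cons,
        mul_one, mul_zero]
    exact h'.symm

/-- The span of a boundary direction is disjoint from the open wedge. -/
lemma span_lineDir_disjoint_wedge {γ : ℝ} (hc : 0 < Real.cos γ) {b : Bool} {v : E2}
    (hv : v ∈ ℝ ∙ lineDir γ b) : v ∉ wedge γ := by
  intro hw
  obtain ⟨c, rfl⟩ := Submodule.mem_span_singleton.1 hv
  obtain ⟨h0, h1, h2⟩ := hw
  cases b with
  | true =>
    have : (c • lineDir γ true) 1 = 0 := by simp [lineDir, pt]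
    rw [this] at h1; exact lt_irrefl _ h1
  | false =>
    have e0 : (c • lineDir γ false) 0 = c * Real.cos γ := by simp [lineDir, pt]
    have e1 : (c • lineDir γ false) 1 = c * Real.sin γ := by simp [lineDir, pt]
    rw [e1] at h2
    rw [e0, Real.tan_eq_sin_div_cos] at h2
    have : c * Real.cos γ * (Real.sin γ / Real.cos γ) = c * Real.sin γ := by
      field_simp
    rw [this] at h2
    exact lt_irrefl _ h2

/-- Composition of the first `k` boundary reflections (the unfolding isometry). -/
def Sfold (γ : ℝ) (h : ℕ → Bool) : ℕ → (E2 ≃ₗᵢ[ℝ] E2)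
  | 0 => LinearIsometryEquiv.refl ℝ E2
  | k + 1 => (Submodule.reflection (ℝ ∙ lineDir γ (h (k + 1)))).trans (Sfold γ h k)

lemma Sfold_congr (γ : ℝ) (h h' : ℕ → Bool) :
    ∀ k, (∀ i, 1 ≤ i → i ≤ k → h i = h' i) → Sfold γ h k = Sfold γ h' k := by
  intro k
  induction k with
  | zero => intro _; rfl
  | succ k ih =>
    intro hag
    have e1 : h (k + 1) = h' (k + 1) := hag (k + 1) (by omega) le_rfl
    have e2 := ih (fun i h1 h2 => hag i h1 (by omega))
    simp only [Sfold]
    rw [e2]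
    exact congrArg (fun b => (Submodule.reflection (ℝ ∙ lineDir γ b)).trans (Sfold γ h' k)) e1

section Unfold

variable {γ : ℝ} {p : E2} {n : ℕ} (P : ClosedBounce γ p n)

/-- The unit direction of the `k`-th segment (ending at `q k`). -/
def udir (k : ℕ) : E2 := (‖P.q k - P.q (k - 1)‖)⁻¹ • (P.q k - P.q (k - 1))

lemma udir_norm_one (k : ℕ) (hk : k ≤ n) : ‖udir P (k + 1)‖ = 1 := by
  have hne : P.q (k + 1) - P.q k ≠ 0 := sub_ne_zero.2 (P.distinct k hk).symm
  simp only [udir, Nat.add_sub_cancel]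
  rw [norm_smul, norm_inv, norm_norm, inv_mul_cancel₀ (norm_ne_zero_iff.2 hne)]

lemma seg_eq_smul_udir (k : ℕ) (hk : k ≤ n) :
    P.q (k + 1) - P.q k = ‖P.q (k + 1) - P.q k‖ • udir P (k + 1) := by
  have hne : P.q (k + 1) - P.q k ≠ 0 := sub_ne_zero.2 (P.distinct k hk).symm
  simp only [udir, Nat.add_sub_cancel, smul_smul]
  rw [mul_inv_cancel₀ (norm_ne_zero_iff.2 hne), one_smul]

lemma reflects' (k : ℕ) (h1 : 1 ≤ k) (h2 : k ≤ n) :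
    udir P (k + 1) = Submodule.reflection (ℝ ∙ lineDir γ (P.horiz k)) (udir P k) := by
  have := P.reflects k h1 h2
  rw [reflDir_lineDir_eq] at this
  simpa only [udir, Nat.add_sub_cancel] using this

/-- Unfolded directions are all equal to the initial direction. -/
lemma dir_unfold : ∀ k, 1 ≤ k → k ≤ n + 1 →
    Sfold γ P.horiz (k - 1) (udir P k) = udir P 1 := by
  intro k
  induction k with
  | zero => omega
  | succ k ih =>
    intro _ hkn
    rcases Nat.eq_zero_or_pos k with rfl | hk1
    · simp [Sfold]
    · obtain ⟨j, rfl⟩ : ∃ j, k = j + 1 := ⟨k - 1, by omega⟩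
      show Sfold γ P.horiz (j + 1) (udir P (j + 1 + 1)) = udir P 1
      simp only [Sfold, LinearIsometryEquiv.trans_apply]
      rw [reflects' P (j + 1) (by omega) (by omega)]
      rw [Submodule.reflection_reflection]
      simpa using ih (by omega) (by omega)

/-- Unfolded bounce points lie on the ray from `p` with direction `udir P 1`. -/
lemma points_unfold (hc : Real.cos γ ≠ 0) : ∀ k, k ≤ n + 1 →
    Sfold γ P.horiz (k - 1) (P.q k)
      = p + (∑ j ∈ Finset.range k, ‖P.q (j + 1) - P.q j‖) • udir P 1 := by
  intro k
  induction k with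
  | zero => simp [Sfold, P.start]
  | succ k ih =>
    intro hkn
    rcases Nat.eq_zero_or_pos k with rfl | hk1
    · simp only [Nat.zero_add, Finset.sum_range_one]
      have hseg : P.q 1 - P.q 0 = ‖P.q 1 - P.q 0‖ • udir P 1 := by
        simpa using seg_eq_smul_udir P 0 (Nat.zero_le n)
      have h0 : (Sfold γ P.horiz (1 - 1)) (P.q 1) = P.q 1 := rfl
      rw [h0, ← hseg, P.start]
      abel
    · obtain ⟨j, rfl⟩ : ∃ j, k = j + 1 := ⟨k - 1, by omega⟩
      have hmem : P.q (j + 1) ∈ ℝ ∙ lineDir γ (P.horiz (j + 1)) :=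
        onBoundary_mem_span hc (P.onLine (j + 1) (by omega) (by omega))
      have key : Submodule.reflection (ℝ ∙ lineDir γ (P.horiz (j + 1))) (P.q (j + 1 + 1))
          = P.q (j + 1) + ‖P.q (j + 1 + 1) - P.q (j + 1)‖ • udir P (j + 1) := by
        calc Submodule.reflection (ℝ ∙ lineDir γ (P.horiz (j + 1))) (P.q (j + 1 + 1))
            = Submodule.reflection (ℝ ∙ lineDir γ (P.horiz (j + 1)))
                (P.q (j + 1) + (P.q (j + 1 + 1) - P.q (j + 1))) := by rw [add_sub_cancel]
          _ = Submodule.reflection (ℝ ∙ lineDir γ (P.horiz (j + 1))) (P.q (j + 1))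
              + Submodule.reflection (ℝ ∙ lineDir γ (P.horiz (j + 1)))
                  (P.q (j + 1 + 1) - P.q (j + 1)) := map_add _ _ _
          _ = P.q (j + 1) + Submodule.reflection (ℝ ∙ lineDir γ (P.horiz (j + 1)))
                (‖P.q (j + 1 + 1) - P.q (j + 1)‖ • udir P (j + 1 + 1)) := by
                rw [Submodule.reflection_mem_subspace_eq_self hmem]
                exact congrArg _ (congrArg _ (seg_eq_smul_udir P (j + 1) (by omega)))
          _ = P.q (j + 1) + ‖P.q (j + 1 + 1) - P.q (j + 1)‖ • udir P (j + 1) := by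
                rw [map_smul, reflects' P (j + 1) (by omega) (by omega), Submodule.reflection_reflection]
      show (Sfold γ P.horiz (j + 1 + 1 - 1)) (P.q (j + 1 + 1)) = _
      simp only [Nat.add_sub_cancel, Sfold, LinearIsometryEquiv.trans_apply]
      rw [key, map_add, map_smul]
      have ih' := ih (by omega)
      simp only [Nat.add_sub_cancel] at ih'
      have hd := dir_unfold P (j + 1) (by omega) (by omega)
      simp only [Nat.add_sub_cancel] at hd
      rw [ih', hd]
      conv_rhs => rw [Finset.sum_range_succ, add_smul]
      rw [add_assoc]

end Unfold

/-- Uniqueness: two closed billiard paths with the same base point and the same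
bounce pattern coincide. -/
lemma path_unique {γ : ℝ} (hγ0 : 0 < γ) (hγ1 : γ < π / 2) {p : E2} {n : ℕ}
    (P P' : ClosedBounce γ p n)
    (hh : ∀ k, 1 ≤ k → k ≤ n → P.horiz k = P'.horiz k) :
    ∀ k ≤ n + 1, P.q k = P'.q k := by
  have hc : 0 < Real.cos γ := Real.cos_pos_of_mem_Ioo ⟨by linarith [Real.pi_pos], hγ1⟩
  have hS : ∀ k ≤ n, Sfold γ P.horiz k = Sfold γ P'.horiz k := fun k hk =>
    Sfold_congr γ _ _ k (fun i h1 h2 => hh i h1 (le_trans h2 hk))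
  set u := udir P 1 with hu
  set u' := udir P' 1 with hu'
  set L := ∑ j ∈ Finset.range (n + 1), ‖P.q (j + 1) - P.q j‖ with hLdef
  set L' := ∑ j ∈ Finset.range (n + 1), ‖P'.q (j + 1) - P'.q j‖ with hL'def
  have hLpos : 0 < L := by
    rw [hLdef]
    refine Finset.sum_pos' (fun i _ => norm_nonneg _) ⟨0, Finset.mem_range.2 (by omega), ?_⟩
    exact norm_pos_iff.2 (sub_ne_zero.2 (P.distinct 0 (by omega)).symm)
  have hL'pos : 0 < L' := by
    rw [hL'def]
    refine Finset.sum_pos' (fun i _ => norm_nonneg _) ⟨0, Finset.mem_range.2 (by omega), ?_⟩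
    exact norm_pos_iff.2 (sub_ne_zero.2 (P'.distinct 0 (by omega)).symm)
  have hnu : ‖u‖ = 1 := by
    rw [hu]; simpa using udir_norm_one P 0 (Nat.zero_le n)
  have hnu' : ‖u'‖ = 1 := by
    rw [hu']; simpa using udir_norm_one P' 0 (Nat.zero_le n)
  have hend : p + L • u = p + L' • u' := by
    have e1 := points_unfold P hc.ne' (n + 1) le_rfl
    have e2 := points_unfold P' hc.ne' (n + 1) le_rfl
    simp only [Nat.add_sub_cancel, P.closes, P'.closes] at e1 e2
    rw [← hu, ← hLdef] at e1
    rw [← hu', ← hL'def] at e2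
    rw [← e1, ← e2, hS n le_rfl]
  have hLL : L • u = L' • u' := add_left_cancel hend
  have hLeq : L = L' := by
    have h3 := congrArg norm hLL
    rwa [norm_smul, norm_smul, hnu, hnu', mul_one, mul_one, Real.norm_eq_abs,
      Real.norm_eq_abs, abs_of_pos hLpos, abs_of_pos hL'pos] at h3
  rw [← hLeq] at hLL
  have huu : u = u' := smul_right_injective E2 hLpos.ne' hLL
  intro k hk
  rcases Nat.eq_zero_or_pos k with rfl | hk1
  · rw [P.start, P'.start]
  rcases Nat.lt_or_ge k (n + 1) with hklt | hkge
  · obtain ⟨k', rfl⟩ : ∃ k', k = k' + 1 := ⟨k - 1, by omega⟩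
    have e1 := points_unfold P hc.ne' (k' + 1) (by omega)
    have e2 := points_unfold P' hc.ne' (k' + 1) (by omega)
    simp only [Nat.add_sub_cancel] at e1 e2
    rw [← hu] at e1
    rw [← hu', ← huu, ← hS k' (by omega)] at e2
    set s := ∑ j ∈ Finset.range (k' + 1), ‖P.q (j + 1) - P.q j‖ with hs
    set s' := ∑ j ∈ Finset.range (k' + 1), ‖P'.q (j + 1) - P'.q j‖ with hs'
    have hdir := dir_unfold P (k' + 1) (by omega) (by omega)
    simp only [Nat.add_sub_cancel] at hdir
    rw [← hu] at hdir
    have hsub : P.q (k' + 1) - P'.q (k' + 1) = (s - s') • udir P (k' + 1) := by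
      apply (Sfold γ P.horiz k').injective
      rw [map_sub, map_smul, hdir, e1, e2, sub_smul]
      abel
    have hspan : P.q (k' + 1) ∈ ℝ ∙ lineDir γ (P.horiz (k' + 1)) :=
      onBoundary_mem_span hc.ne' (P.onLine (k' + 1) (by omega) (by omega))
    have hspan' : P'.q (k' + 1) ∈ ℝ ∙ lineDir γ (P.horiz (k' + 1)) := by
      rw [hh (k' + 1) (by omega) (by omega)]
      exact onBoundary_mem_span hc.ne' (P'.onLine (k' + 1) (by omega) (by omega))
    have hss : s = s' := by
      by_contra hne
      have hdmem : udir P (k' + 1) ∈ ℝ ∙ lineDir γ (P.horiz (k' + 1)) := by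
        have h4 := Submodule.smul_mem (ℝ ∙ lineDir γ (P.horiz (k' + 1))) (s - s')⁻¹
          (sub_mem hspan hspan')
        rw [hsub, smul_smul, inv_mul_cancel₀ (sub_ne_zero.2 hne), one_smul] at h4
        exact h4
      have hqprev : P.q k' ∈ ℝ ∙ lineDir γ (P.horiz (k' + 1)) := by
        have h5 : P.q k' = P.q (k' + 1) - ‖P.q (k' + 1) - P.q k'‖ • udir P (k' + 1) := by
          rw [← seg_eq_smul_udir P k' (by omega)]; abel
        rw [h5]
        exact sub_mem hspan (Submodule.smul_mem _ _ hdmem)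
      have hmid := P.segs_in_wedge k' (by omega) (1/2) (by norm_num) (by norm_num)
      exact span_lineDir_disjoint_wedge hc
        (Submodule.add_mem _ (Submodule.smul_mem _ _ hqprev) (Submodule.smul_mem _ _ hspan)) hmid
    apply (Sfold γ P.horiz k').injective
    rw [e1, e2, hss]
  · have hk2 : k = n + 1 := by omega
    subst hk2
    rw [P.closes, P'.closes]

/-- A closed billiard path with an odd number of bounces retraces itself. -/
lemma odd_retrace_aux {γ : ℝ} (hγ0 : 0 < γ) (hγ1 : γ < π / 2) {p : E2} {n m : ℕ}
    (hnm : n + 1 = 2 * m) (P : ClosedBounce γ p n) :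
    ∀ k ≤ n + 1, P.q k = P.q (n + 1 - k) := by
  have hpar : ∀ k, 1 ≤ k → k ≤ n →
      P.horiz k = (if k % 2 = 1 then P.horiz 1 else !P.horiz 1) := by
    intro k
    induction k with
    | zero => omega
    | succ k ih =>
      intro _ hk
      rcases Nat.eq_zero_or_pos k with rfl | hk1
      · simp
      · have halt := P.alt k hk1 (by omega)
        rw [halt, ih hk1 (by omega)]
        rcases Nat.even_or_odd k with he | ho
        · have h1 : k % 2 = 0 := Nat.even_iff.1 he
          have h2 : (k + 1) % 2 = 1 := by omega
          simp [h1, h2]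
        · have h1 : k % 2 = 1 := Nat.odd_iff.1 ho
          have h2 : (k + 1) % 2 = 0 := by omega
          simp [h1, h2]
  let P' : ClosedBounce γ p n :=
    { q := fun k => P.q (n + 1 - k)
      horiz := fun k => P.horiz (n + 1 - k)
      alt := by
        intro k hk1 hkn
        have h1 : n + 1 - (k + 1) = n - k := by omega
        have h2 : n - k + 1 = n + 1 - k := by omega
        have halt := P.alt (n - k) (by omega) (by omega)
        rw [h2] at halt
        simp only [h1]
        rw [halt, Bool.not_not]
      start := by simp [P.closes]
      closes := by simp [P.start]
      distinct := by
        intro k hk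
        have h1 : n + 1 - k = n - k + 1 := by omega
        have h2 : n + 1 - (k + 1) = n - k := by omega
        simp only [h1, h2]
        exact (P.distinct (n - k) (by omega)).symm
      bounce_ne_vertex := fun k hk1 hk2 => P.bounce_ne_vertex (n + 1 - k) (by omega) (by omega)
      onLine := fun k hk1 hk2 => P.onLine (n + 1 - k) (by omega) (by omega)
      segs_in_wedge := by
        intro k hk t ht0 ht1
        have h1 : n + 1 - k = n - k + 1 := by omega
        have h2 : n + 1 - (k + 1) = n - k := by omega
        simp only [h1, h2]
        have hw := P.segs_in_wedge (n - k) (by omega) (1 - t) (by linarith) (by linarith)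
        have e : (1:ℝ) - (1 - t) = t := by ring
        rw [e, add_comm] at hw
        exact hw
      reflects := by
        intro k hk1 hk2
        have h1 : n + 1 - (k + 1) = n - k := by omega
        have h2 : n + 1 - k = n - k + 1 := by omega
        have h3 : n + 1 - (k - 1) = n - k + 1 + 1 := by omega
        simp only [h1, h2, h3]
        set j := n - k with hjdef
        have hrefl := P.reflects (j + 1) (by omega) (by omega)
        simp only [Nat.add_sub_cancel] at hrefl
        rw [reflDir_lineDir_eq] at hrefl
        rw [show P.q j - P.q (j + 1) = -(P.q (j + 1) - P.q j) from (neg_sub _ _).symm,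
          show P.q (j + 1) - P.q (j + 1 + 1) = -(P.q (j + 1 + 1) - P.q (j + 1)) from
            (neg_sub _ _).symm,
          norm_neg, norm_neg, smul_neg, smul_neg, reflDir_neg, reflDir_lineDir_eq, hrefl,
          Submodule.reflection_reflection] }
  have hh : ∀ k, 1 ≤ k → k ≤ n → P.horiz k = P'.horiz k := by
    intro k hk1 hk2
    show P.horiz k = P.horiz (n + 1 - k)
    rw [hpar k hk1 hk2, hpar (n + 1 - k) (by omega) (by omega)]
    have hmod : (n + 1 - k) % 2 = k % 2 := by omega
    rw [hmod]
  have huniq := path_unique hγ0 hγ1 P P' hh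
  intro k hk
  have h1 := huniq k hk
  have h2 : P'.q k = P.q (n + 1 - k) := rfl
  rw [h1, h2]

/-- Every closed `(2m−1)`-bounce billiard path `q₀, q₁, …, q_{2m−1}, q_{2m} = q₀`
in the wedge `W_γ` retraces itself: `q (m+j) = q (m−j)` for every `0 ≤ j ≤ m`. -/
theorem odd_bounce_retraces (γ : ℝ) (hγ0 : 0 < γ) (hγ1 : γ < π / 2)
    (p : E2) (hp : p ∈ wedge γ) (m : ℕ) (hm : 1 ≤ m)
    (P : ClosedBounce γ p (2 * m - 1)) :
    ∀ j ≤ m, P.q (m + j) = P.q (m - j) := by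
  intro j hj
  have h := odd_retrace_aux hγ0 hγ1 (n := 2 * m - 1) (m := m) (by omega) P (m + j) (by omega)
  rwa [show 2 * m - 1 + 1 - (m + j) = m - j from by omega] at h

end
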